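/- Let l be a filter on a type α with l ≠ ⊥ (l.NeBot), let g : α → ℝ, and suppose there exists v ∈ ℝ × ℝ such that the function x ↦ (Real.sqrt (1 + (g x)²))⁻¹ • ((1 : ℝ), g x) tends to v along l. Then there exists L : EReal such that the function x ↦ (g x : EReal) tends to L along l (that is, g converges to a finite limit, or to +∞, or to −∞, along l). -/

import Mathlib

open Filter Topology

theorem slope_tendsto_ereal_of_unit_direction_tendsto {α : Type*} (l : Filter α) [l.NeBot]
    (g : α → ℝ)
    (h : ∃ v : ℝ × ℝ,
      Tendsto (fun x => (Real.sqrt (1 + (g x) ^ 2))⁻¹ • (((1 : ℝ), g x) : ℝ × ℝ)) l (𝓝 v)) :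
    ∃ L : EReal, Tendsto (fun x => ((g x : EReal))) l (𝓝 L) := by
  obtain ⟨v, hv⟩ := h
  set c : α → ℝ := fun x => (Real.sqrt (1 + (g x) ^ 2))⁻¹ with hcdef
  have hpos : ∀ x, 0 < c x := by
    intro x
    have h1 : (0:ℝ) < 1 + (g x) ^ 2 := by positivity
    exact inv_pos.mpr (Real.sqrt_pos.mpr h1)
  have h1 : Tendsto (fun x => c x) l (𝓝 v.1) := by
    have := (continuous_fst.tendsto v).comp hv
    simpa [Function.comp_def, Prod.smul_mk, smul_eq_mul] using this
  have h2 : Tendsto (fun x => c x * g x) l (𝓝 v.2) := by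
    have := (continuous_snd.tendsto v).comp hv
    simpa [Function.comp_def, Prod.smul_mk, smul_eq_mul] using this
  have ha : 0 ≤ v.1 := ge_of_tendsto' h1 fun x => (hpos x).le
  rcases ha.lt_or_eq with hlt | heq
  · -- v.1 > 0 : finite limit v.2 / v.1
    refine ⟨((v.2 / v.1 : ℝ) : EReal), ?_⟩
    rw [EReal.tendsto_coe]
    have : Tendsto (fun x => c x * g x / c x) l (𝓝 (v.2 / v.1)) := h2.div h1 hlt.ne'
    refine this.congr fun x => ?_
    field_simp [(hpos x).ne']
  · -- v.1 = 0 : |g| → ∞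
    have hsq : v.1 ^ 2 + v.2 ^ 2 = 1 := by
      have hconst : Tendsto (fun x => c x ^ 2 + (c x * g x) ^ 2) l
          (𝓝 (v.1 ^ 2 + v.2 ^ 2)) := ((h1.pow 2).add (h2.pow 2))
      have hone : (fun x => c x ^ 2 + (c x * g x) ^ 2) = fun _ => (1:ℝ) := by
        funext x
        have hx : (0:ℝ) ≤ 1 + (g x) ^ 2 := by positivity
        have hs : Real.sqrt (1 + (g x) ^ 2) ^ 2 = 1 + (g x) ^ 2 := Real.sq_sqrt hx
        have hc2 : c x ^ 2 = (1 + g x ^ 2)⁻¹ := by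
          simp only [hcdef, inv_pow, hs]
        have hcomb : c x ^ 2 + (c x * g x) ^ 2 = c x ^ 2 * (1 + g x ^ 2) := by ring
        rw [hcomb, hc2, inv_mul_cancel₀ (by positivity)]
      rw [hone] at hconst
      exact (tendsto_const_nhds_iff.mp hconst).symm
    have hb : v.2 = 1 ∨ v.2 = -1 := by
      have : v.2 * v.2 = 1 := by nlinarith
      exact mul_self_eq_one_iff.mp this
    have hcinv : Tendsto (fun x => (c x)⁻¹) l atTop := by
      have : Tendsto c l (𝓝[>] (0:ℝ)) := by
        rw [← heq] at h1
        exact tendsto_nhdsWithin_of_tendsto_nhds_of_eventually_within _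
          (by simpa [← heq] using h1) (Eventually.of_forall fun x => hpos x)
      exact this.inv_tendsto_nhdsGT_zero
    have key : ∀ x, c x * g x * (c x)⁻¹ = g x := fun x => by
      field_simp [(hpos x).ne']
    rcases hb with hb | hb
    · refine ⟨⊤, ?_⟩
      have hgt : Tendsto g l atTop := by
        have := Tendsto.pos_mul_atTop (by norm_num : (0:ℝ) < 1) (hb ▸ h2) hcinv
        exact this.congr key
      rw [EReal.tendsto_nhds_top_iff_real]
      intro x
      filter_upwards [hgt.eventually_gt_atTop x] with a hx
      exact_mod_cast hx
    · refine ⟨⊥, ?_⟩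
      have hgt : Tendsto g l atBot := by
        have := Tendsto.neg_mul_atTop (by norm_num : (-1:ℝ) < 0) (hb ▸ h2) hcinv
        exact this.congr key
      rw [EReal.tendsto_nhds_bot_iff_real]
      intro x
      filter_upwards [hgt.eventually_lt_atBot x] with a hx
      exact_mod_cast hx
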